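/- With vector addition ⊕ and scalar multiplication ⊙, the set P_n of strictly positive probability vectors is a vector space over ℝ. -/

import Mathlib

open Real BigOperators Finset Filter

def IsPosProb {n : ℕ} (p : Fin n → ℝ) : Prop :=
  (∀ i, 0 < p i) ∧ ∑ i, p i = 1

noncomputable def oplus {n : ℕ} (p q : Fin n → ℝ) : Fin n → ℝ :=
  fun i => p i * q i / ∑ j, p j * q j

noncomputable def odot {n : ℕ} (α : ℝ) (p : Fin n → ℝ) : Fin n → ℝ :=
  fun i => p i ^ α / ∑ j, p j ^ α

noncomputable def unif (n : ℕ) : Fin n → ℝ := fun _ => 1 / n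

noncomputable def logIP {n : ℕ} (p q : Fin n → ℝ) : ℝ :=
  ∑ i : Fin (n - 1),
    Real.log (p ⟨i.val, by have := i.isLt; omega⟩ / p ⟨i.val + 1, by have := i.isLt; omega⟩) *
    Real.log (q ⟨i.val, by have := i.isLt; omega⟩ / q ⟨i.val + 1, by have := i.isLt; omega⟩)

noncomputable def logNorm {n : ℕ} (p : Fin n → ℝ) : ℝ := Real.sqrt (logIP p p)

noncomputable def psub {n : ℕ} (p q : Fin n → ℝ) : Fin n → ℝ := oplus p (odot (-1) q)

lemma my_sum_pos {n : ℕ} (hn : 0 < n) (u : Fin n → ℝ) (hu : ∀ i, 0 < u i) :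
    0 < ∑ i, u i :=
  Finset.sum_pos (fun i _ => hu i) ⟨⟨0, hn⟩, Finset.mem_univ _⟩

lemma my_key {n : ℕ} (u v : Fin n → ℝ) (c : ℝ) (hc : c ≠ 0) (h : ∀ i, v i = c * u i) :
    ∀ i, v i / ∑ j, v j = u i / ∑ j, u j := by
  intro i
  have hs : ∑ j, v j = c * ∑ j, u j := by
    rw [Finset.mul_sum]; exact Finset.sum_congr rfl (fun j _ => h j)
  rw [h i, hs, mul_div_mul_left _ _ hc]

lemma my_norm {n : ℕ} (hn : 0 < n) (u : Fin n → ℝ) (hu : ∀ i, 0 < u i) :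
    IsPosProb (fun i => u i / ∑ j, u j) := by
  have hs := my_sum_pos hn u hu
  exact ⟨fun i => div_pos (hu i) hs, by rw [← Finset.sum_div, div_self hs.ne']⟩

theorem stmt11 {n : ℕ} (hn : 0 < n) :
    (∀ p q : Fin n → ℝ, IsPosProb p → IsPosProb q → IsPosProb (oplus p q)) ∧
    (∀ p q : Fin n → ℝ, IsPosProb p → IsPosProb q → oplus p q = oplus q p) ∧
    (∀ p q r : Fin n → ℝ, IsPosProb p → IsPosProb q → IsPosProb r →
      oplus (oplus p q) r = oplus p (oplus q r)) ∧
    (IsPosProb (unif n) ∧ ∀ p : Fin n → ℝ, IsPosProb p → oplus p (unif n) = p) ∧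
    (∀ p : Fin n → ℝ, IsPosProb p → oplus p (odot (-1) p) = unif n) ∧
    (∀ (α : ℝ) (p : Fin n → ℝ), IsPosProb p → IsPosProb (odot α p)) ∧
    (∀ p : Fin n → ℝ, IsPosProb p → odot 1 p = p) ∧
    (∀ (α β : ℝ) (p : Fin n → ℝ), IsPosProb p → odot (α * β) p = odot α (odot β p)) ∧
    (∀ (α : ℝ) (p q : Fin n → ℝ), IsPosProb p → IsPosProb q →
      odot α (oplus p q) = oplus (odot α p) (odot α q)) ∧
    (∀ (α β : ℝ) (p : Fin n → ℝ), IsPosProb p →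
      odot (α + β) p = oplus (odot α p) (odot β p)) := by
  have hnR : (0:ℝ) < n := Nat.cast_pos.mpr hn
  refine ⟨?_, ?_, ?_, ⟨?_, ?_⟩, ?_, ?_, ?_, ?_, ?_, ?_⟩
  · -- closure of oplus
    intro p q hp hq
    exact my_norm hn _ (fun i => mul_pos (hp.1 i) (hq.1 i))
  · -- commutativity
    intro p q hp hq
    funext i
    simp only [oplus]
    rw [show ∀ j, p j * q j = q j * p j from fun j => mul_comm _ _]
    congr 1
    exact Finset.sum_congr rfl (fun j _ => mul_comm _ _)
  · -- associativity
    intro p q r hp hq hr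
    have hS := my_sum_pos hn _ (fun i => mul_pos (hp.1 i) (hq.1 i))
    have hT := my_sum_pos hn _ (fun i => mul_pos (hq.1 i) (hr.1 i))
    funext i
    exact (my_key (fun i => p i * q i * r i) (fun i => oplus p q i * r i) (∑ j, p j * q j)⁻¹
        (inv_ne_zero hS.ne') (fun i => by unfold oplus; ring) i).trans
      (my_key (fun i => p i * q i * r i) (fun i => p i * oplus q r i) (∑ j, q j * r j)⁻¹
        (inv_ne_zero hT.ne') (fun i => by unfold oplus; ring) i).symm
  · -- unif is a pos prob
    refine ⟨fun _ => div_pos one_pos hnR, ?_⟩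
    simp [unif, Finset.sum_const, Finset.card_univ]
    field_simp
  · -- identity
    intro p hp
    funext i
    have := my_key p (fun i => p i * unif n i) (1 / n)
      (by positivity) (fun i => by unfold unif; ring) i
    rw [hp.2, div_one] at this
    exact this
  · -- inverse
    intro p hp
    have hT := my_sum_pos hn (fun j => p j ^ (-1:ℝ))
      (fun j => Real.rpow_pos_of_pos (hp.1 j) _)
    funext i
    have h1 : ∀ i, p i * odot (-1) p i = (∑ j, p j ^ (-1:ℝ))⁻¹ * (1:ℝ) := by
      intro i
      unfold odot
      rw [Real.rpow_neg_one]
      field_simp [(hp.1 i).ne']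
    have := my_key (fun _ => (1:ℝ)) (fun i => p i * odot (-1) p i)
      (∑ j, p j ^ (-1:ℝ))⁻¹ (inv_ne_zero hT.ne') h1 i
    calc oplus p (odot (-1) p) i = (1:ℝ) / ∑ _j : Fin n, (1:ℝ) := this
      _ = unif n i := by
          simp [unif, Finset.sum_const, Finset.card_univ]
  · -- closure of odot
    intro α p hp
    exact my_norm hn _ (fun i => Real.rpow_pos_of_pos (hp.1 i) α)
  · -- one smul
    intro p hp
    funext i
    simp only [odot, Real.rpow_one]
    rw [hp.2, div_one]
  · -- mul smul
    intro α β p hp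
    have hT := my_sum_pos hn (fun j => p j ^ β)
      (fun j => Real.rpow_pos_of_pos (hp.1 j) _)
    have hTα : (0:ℝ) < (∑ j, p j ^ β) ^ α := Real.rpow_pos_of_pos hT _
    funext i
    exact (my_key (fun i => (p i ^ β) ^ α) (fun i => p i ^ (α * β)) 1 one_ne_zero
        (fun i => by
          rw [one_mul, mul_comm α β, Real.rpow_mul (hp.1 i).le]) i).trans
      (my_key (fun i => (p i ^ β) ^ α) (fun i => odot β p i ^ α) ((∑ j, p j ^ β) ^ α)⁻¹
        (inv_ne_zero hTα.ne') (fun i => by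
          unfold odot
          rw [Real.div_rpow (Real.rpow_pos_of_pos (hp.1 i) β).le hT.le]
          ring) i).symm
  · -- smul distributes over oplus
    intro α p q hp hq
    have hS := my_sum_pos hn _ (fun i => mul_pos (hp.1 i) (hq.1 i))
    have hSα : (0:ℝ) < (∑ j, p j * q j) ^ α := Real.rpow_pos_of_pos hS _
    have hA := my_sum_pos hn (fun j => p j ^ α)
      (fun j => Real.rpow_pos_of_pos (hp.1 j) _)
    have hB := my_sum_pos hn (fun j => q j ^ α)
      (fun j => Real.rpow_pos_of_pos (hq.1 j) _)
    funext i
    exact (my_key (fun i => p i ^ α * q i ^ α) (fun i => oplus p q i ^ α) ((∑ j, p j * q j) ^ α)⁻¹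
        (inv_ne_zero hSα.ne') (fun i => by
          unfold oplus
          rw [Real.div_rpow (mul_pos (hp.1 i) (hq.1 i)).le hS.le,
            Real.mul_rpow (hp.1 i).le (hq.1 i).le]
          ring) i).trans
      (my_key (fun i => p i ^ α * q i ^ α) (fun i => odot α p i * odot α q i) ((∑ j, p j ^ α) * (∑ j, q j ^ α))⁻¹
        (inv_ne_zero (mul_pos hA hB).ne') (fun i => by
          unfold odot
          ring) i).symm
  · -- add smul
    intro α β p hp
    have hA := my_sum_pos hn (fun j => p j ^ α)
      (fun j => Real.rpow_pos_of_pos (hp.1 j) _)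
    have hB := my_sum_pos hn (fun j => p j ^ β)
      (fun j => Real.rpow_pos_of_pos (hp.1 j) _)
    funext i
    exact (my_key (fun i => p i ^ α * p i ^ β) (fun i => p i ^ (α + β)) 1 one_ne_zero
        (fun i => by rw [one_mul, Real.rpow_add (hp.1 i)]) i).trans
      (my_key (fun i => p i ^ α * p i ^ β) (fun i => odot α p i * odot β p i) ((∑ j, p j ^ α) * (∑ j, p j ^ β))⁻¹
        (inv_ne_zero (mul_pos hA hB).ne') (fun i => by
          unfold odot
          ring) i).symm
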